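/- Let d ≥ 1, let ψ : Fin d² → ℂᵈ be unit vectors satisfying |⟨ψ_ξ, ψ_ζ⟩|² = (d·δ_{ξζ} + 1)/(d + 1) for all ξ, ζ, and let ρ be a d×d Hermitian positive definite matrix with tr ρ = 1. Define Π_ξ := |ψ_ξ⟩⟨ψ_ξ|/d and p_ξ := tr(Π_ξ ρ) > 0, and let F be the ℝ-linear map on the real vector space of d×d Hermitian matrices given by F(X) = ∑_ξ p_ξ⁻¹ tr(Π_ξ X) Π_ξ. Then F is bijective, and the trace of the ℝ-linear endomorphism F⁻¹ equals d² + d − 1. Consequently the scaled mean-square error of the best linear unbiased estimator, Tr(F⁻¹) − tr(ρ²), equals d² + d − 1 − tr(ρ²). -/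

import Mathlib

open Matrix ComplexOrder
open scoped BigOperators

lemma sic_MN (d : ℕ) (hd : 1 ≤ d) :
    (Matrix.of fun ξ ζ : Fin (d^2) => ((d:ℂ) * (if ξ = ζ then 1 else 0) + 1) / ((d:ℂ)^2 * ((d:ℂ)+1))) *
      (Matrix.of fun ξ ζ : Fin (d^2) => (d:ℂ) * ((d:ℂ)+1) * (if ξ = ζ then 1 else 0) - 1) = 1 := by
  have hd0 : (d:ℂ) ≠ 0 := Nat.cast_ne_zero.2 (by omega)
  have hd1 : (d:ℂ) + 1 ≠ 0 := by
    have : ((d:ℂ) + 1) = ((d+1 : ℕ) : ℂ) := by push_cast; ring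
    rw [this]
    exact Nat.cast_ne_zero.2 (by omega)
  ext ξ η
  simp only [Matrix.mul_apply, Matrix.of_apply, Matrix.one_apply]
  have key : ∀ ζ : Fin (d^2), ((d:ℂ) * (if ξ = ζ then 1 else 0) + 1) / ((d:ℂ)^2 * ((d:ℂ)+1)) *
      ((d:ℂ) * ((d:ℂ)+1) * (if ζ = η then 1 else 0) - 1)
      = ((d:ℂ)^2*((d:ℂ)+1))⁻¹ * (((d:ℂ)*((d:ℂ)*((d:ℂ)+1))) * ((if ξ = ζ then 1 else 0) * (if ζ = η then 1 else 0)) - (d:ℂ) * (if ξ = ζ then 1 else 0) + ((d:ℂ)*((d:ℂ)+1)) * (if ζ = η then 1 else 0) - 1) := fun ζ => by ring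
  rw [Finset.sum_congr rfl (fun ζ _ => key ζ), ← Finset.mul_sum]
  have h1 : ∀ ζ : Fin (d^2), (if ξ = ζ then (1:ℂ) else 0) * (if ζ = η then 1 else 0) = if ζ = ξ then (if ξ = η then 1 else 0) else 0 := by
    intro ζ
    by_cases h : ξ = ζ
    · subst h; simp
    · have h2 : ¬ ζ = ξ := fun hh => h hh.symm
      simp [h, h2]
  simp only [h1]
  rw [Finset.sum_sub_distrib, Finset.sum_add_distrib, Finset.sum_sub_distrib, ← Finset.mul_sum, ← Finset.mul_sum, ← Finset.mul_sum]
  simp only [Finset.sum_ite_eq, Finset.sum_ite_eq', Finset.mem_univ, if_true, Finset.sum_const, Finset.card_univ, Fintype.card_fin, nsmul_eq_mul, mul_one]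
  by_cases h : ξ = η
  · simp only [h, if_true]
    field_simp
    push_cast
    ring
  · simp only [h, if_false]
    push_cast
    field_simp
    ring

theorem stmt_10 (d : ℕ) (hd : 1 ≤ d) (ψ : Fin (d ^ 2) → Fin d → ℂ)
    (hunit : ∀ ξ, star (ψ ξ) ⬝ᵥ ψ ξ = 1)
    (hsic : ∀ ξ ζ, ‖star (ψ ξ) ⬝ᵥ ψ ζ‖ ^ 2 =
      ((d : ℝ) * (if ξ = ζ then 1 else 0) + 1) / (d + 1))
    (ρ : Matrix (Fin d) (Fin d) ℂ) (hρ : ρ.PosDef) (hρtr : ρ.trace = 1)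
    (P : Fin (d ^ 2) → Matrix (Fin d) (Fin d) ℂ)
    (hPdef : ∀ ξ, P ξ = ((d : ℂ))⁻¹ • vecMulVec (ψ ξ) (star (ψ ξ)))
    (p : Fin (d ^ 2) → ℝ)
    (hp : ∀ ξ, (p ξ : ℂ) = (P ξ * ρ).trace) (hppos : ∀ ξ, 0 < p ξ)
    (F : Matrix (Fin d) (Fin d) ℂ →ₗ[ℂ] Matrix (Fin d) (Fin d) ℂ)
    (hF : ∀ X, F X = ∑ ξ, (((p ξ : ℂ))⁻¹ * (P ξ * X).trace) • P ξ) :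
    Function.Bijective F ∧
    ∀ G : Matrix (Fin d) (Fin d) ℂ →ₗ[ℂ] Matrix (Fin d) (Fin d) ℂ,
      (∀ X, G (F X) = X) → (∀ X, F (G X) = X) →
      LinearMap.trace ℂ (Matrix (Fin d) (Fin d) ℂ) G = (d : ℂ) ^ 2 + d - 1 ∧
      LinearMap.trace ℂ (Matrix (Fin d) (Fin d) ℂ) G - (ρ * ρ).trace =
        (d : ℂ) ^ 2 + d - 1 - (ρ * ρ).trace := by
  have hd0 : (d:ℂ) ≠ 0 := Nat.cast_ne_zero.2 (by omega)
  have hd1 : (d:ℂ) + 1 ≠ 0 := by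
    have : ((d:ℂ) + 1) = ((d+1 : ℕ) : ℂ) := by push_cast; ring
    rw [this]
    exact Nat.cast_ne_zero.2 (by omega)
  have hp0 : ∀ ξ, (p ξ : ℂ) ≠ 0 := fun ξ => by
    exact_mod_cast Complex.ofReal_ne_zero.2 (ne_of_gt (hppos ξ))
  set M : Matrix (Fin (d^2)) (Fin (d^2)) ℂ :=
    Matrix.of fun ξ ζ => ((d:ℂ) * (if ξ = ζ then 1 else 0) + 1) / ((d:ℂ)^2 * ((d:ℂ)+1)) with hMdef
  set N : Matrix (Fin (d^2)) (Fin (d^2)) ℂ :=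
    Matrix.of fun ξ ζ => (d:ℂ) * ((d:ℂ)+1) * (if ξ = ζ then 1 else 0) - 1 with hNdef
  have hMN : M * N = 1 := sic_MN d hd
  have hNM : N * M = 1 := mul_eq_one_comm.mp hMN
  -- Gram matrix
  have hvv : ∀ (a b c e : Fin d → ℂ), vecMulVec a b * vecMulVec c e = (b ⬝ᵥ c) • vecMulVec a e := by
    intro a b c e
    ext i j
    simp only [Matrix.mul_apply, vecMulVec_apply, Matrix.smul_apply, dotProduct, smul_eq_mul,
      Finset.sum_mul, Finset.mul_sum]
    exact Finset.sum_congr rfl fun k _ => by ring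
  have htrvv : ∀ (a b : Fin d → ℂ), (vecMulVec a b).trace = b ⬝ᵥ a := by
    intro a b
    simp [Matrix.trace, Matrix.diag, vecMulVec_apply, dotProduct, mul_comm]
  have hgram : ∀ ξ ζ, (P ξ * P ζ).trace = M ξ ζ := by
    intro ξ ζ
    have hstar : star (ψ ζ) ⬝ᵥ ψ ξ = (starRingEnd ℂ) (star (ψ ξ) ⬝ᵥ ψ ζ) := by
      rw [star_dotProduct]; simp
    have hz : (star (ψ ξ) ⬝ᵥ ψ ζ) * (star (ψ ζ) ⬝ᵥ ψ ξ) = ((‖star (ψ ξ) ⬝ᵥ ψ ζ‖^2 : ℝ) : ℂ) := by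
      rw [hstar, Complex.mul_conj]
      norm_cast
      exact Complex.normSq_eq_norm_sq _
    rw [hPdef ξ, hPdef ζ, smul_mul_assoc, mul_smul_comm, hvv, Matrix.trace_smul,
      Matrix.trace_smul, Matrix.trace_smul, htrvv]
    simp only [smul_eq_mul]
    rw [hz, hsic ξ ζ]
    simp only [hMdef, Matrix.of_apply]
    push_cast [apply_ite Complex.ofReal]
    have hd1R : ((d:ℂ) + 1) ≠ 0 := hd1
    field_simp
  -- linear independence
  have hli : LinearIndependent ℂ P := by
    rw [Fintype.linearIndependent_iff]
    intro g hg ξ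
    have hMv : M.mulVec g = 0 := by
      funext ζ
      have h1 : (P ζ * ∑ η, g η • P η).trace = 0 := by rw [hg]; simp
      rw [Matrix.mul_sum] at h1
      simp only [Matrix.mul_smul, Matrix.trace_sum, Matrix.trace_smul, smul_eq_mul] at h1
      have : M.mulVec g ζ = ∑ η, g η * (P ζ * P η).trace := by
        simp only [Matrix.mulVec, dotProduct, hgram]
        exact Finset.sum_congr rfl fun η _ => by ring
      rw [this]
      simpa using h1
    have hg0 : g = 0 := by
      have h2 : N.mulVec (M.mulVec g) = N.mulVec 0 := by rw [hMv]
      rwa [Matrix.mulVec_mulVec, hNM, Matrix.one_mulVec, Matrix.mulVec_zero] at h2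
    exact congrFun hg0 ξ
  have hcard : Fintype.card (Fin (d^2)) = Module.finrank ℂ (Matrix (Fin d) (Fin d) ℂ) := by
    simp [Module.finrank_matrix]
    ring
  haveI : Nonempty (Fin (d^2)) := ⟨⟨0, by positivity⟩⟩
  let b : Module.Basis (Fin (d^2)) ℂ (Matrix (Fin d) (Fin d) ℂ) :=
    basisOfLinearIndependentOfCardEqFinrank hli hcard
  have hb : ∀ ξ, b ξ = P ξ := fun ξ => by
    simp [b, coe_basisOfLinearIndependentOfCardEqFinrank]
  -- nondegeneracy
  have hnd : ∀ X : Matrix (Fin d) (Fin d) ℂ, (∀ ζ, (X * P ζ).trace = 0) → X = 0 := by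
    intro X hX
    have hall : ∀ Y : Matrix (Fin d) (Fin d) ℂ, (X * Y).trace = 0 := by
      intro Y
      have hYr : Y = ∑ ξ, b.repr Y ξ • P ξ := by
        conv_lhs => rw [← b.sum_repr Y]
        exact Finset.sum_congr rfl fun ξ _ => by rw [hb]
      rw [hYr, Matrix.mul_sum]
      simp [Matrix.mul_smul, hX]
    ext i j
    have h := hall (Matrix.single j i 1)
    simpa [Matrix.trace, Matrix.diag, Matrix.mul_apply, Matrix.single, ite_and] using h
  have htrP : ∀ ζ, (P ζ).trace = (d:ℂ)⁻¹ := by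
    intro ζ
    rw [hPdef ζ, Matrix.trace_smul, htrvv, hunit ζ]
    simp
  have hsum : ∑ ξ, P ξ = 1 := by
    have h0 : ∀ ζ, (((∑ ξ, P ξ) - 1) * P ζ).trace = 0 := by
      intro ζ
      rw [Matrix.sub_mul, Matrix.sum_mul, Matrix.one_mul]
      rw [Matrix.trace_sub, Matrix.trace_sum]
      have hMs : ∑ ξ, (P ξ * P ζ).trace = (d:ℂ)⁻¹ := by
        simp only [hgram, hMdef, Matrix.of_apply]
        rw [← Finset.sum_div]
        rw [Finset.sum_add_distrib, ← Finset.mul_sum]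
        simp only [Finset.sum_ite_eq, Finset.sum_ite_eq', Nat.cast_pow, Finset.mem_univ, if_true, Finset.sum_const,
          Finset.card_univ, Fintype.card_fin, nsmul_eq_mul, mul_one]
        field_simp
        ring
      rw [hMs, htrP, sub_self]
    have := hnd _ h0
    rwa [sub_eq_zero] at this
  have hpsum : ∑ ξ, (p ξ : ℂ) = 1 := by
    calc ∑ ξ, (p ξ:ℂ) = ∑ ξ, (P ξ * ρ).trace := Finset.sum_congr rfl fun ξ _ => hp ξ
      _ = ((∑ ξ, P ξ) * ρ).trace := by rw [Matrix.sum_mul, Matrix.trace_sum]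
      _ = 1 := by rw [hsum, Matrix.one_mul, hρtr]
  -- matrix of F
  set A : Matrix (Fin (d^2)) (Fin (d^2)) ℂ := Matrix.of fun ξ ζ => (p ξ:ℂ)⁻¹ * M ξ ζ with hAdef
  set B : Matrix (Fin (d^2)) (Fin (d^2)) ℂ := Matrix.of fun ξ ζ => N ξ ζ * (p ζ : ℂ) with hBdef
  have htm : LinearMap.toMatrix b b F = A := by
    ext ξ ζ
    rw [LinearMap.toMatrix_apply, hb, hF]
    have : ∑ η, ((p η:ℂ)⁻¹ * (P η * P ζ).trace) • P η = ∑ η, ((p η:ℂ)⁻¹ * M η ζ) • b η := by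
      exact Finset.sum_congr rfl fun η _ => by rw [hgram, hb]
    rw [this, b.repr_sum_self]
    simp [hAdef]
  have hAB : A * B = 1 := by
    ext ξ η
    simp only [Matrix.mul_apply, hAdef, hBdef, Matrix.of_apply]
    have hre : ∀ ζ, ((p ξ:ℂ)⁻¹ * M ξ ζ) * (N ζ η * (p η:ℂ))
        = ((p ξ:ℂ)⁻¹ * (p η:ℂ)) * (M ξ ζ * N ζ η) := fun ζ => by ring
    rw [Finset.sum_congr rfl fun ζ _ => hre ζ, ← Finset.mul_sum]
    have hMNe : ∑ ζ, M ξ ζ * N ζ η = (1 : Matrix (Fin (d^2)) (Fin (d^2)) ℂ) ξ η := by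
      rw [← Matrix.mul_apply, hMN]
    rw [hMNe]
    by_cases h : ξ = η
    · subst h
      simp [Matrix.one_apply, inv_mul_cancel₀ (hp0 ξ)]
    · simp [Matrix.one_apply, h]
  have hBA : B * A = 1 := mul_eq_one_comm.mp hAB
  constructor
  · set Ginv := (LinearMap.toMatrix b b).symm B with hGinv
    have hc1 : Ginv.comp F = LinearMap.id := by
      apply (LinearMap.toMatrix b b).injective
      rw [LinearMap.toMatrix_comp b b b, htm, hGinv, LinearEquiv.apply_symm_apply, hBA,
        LinearMap.toMatrix_id]
    have hc2 : F.comp Ginv = LinearMap.id := by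
      apply (LinearMap.toMatrix b b).injective
      rw [LinearMap.toMatrix_comp b b b, htm, hGinv, LinearEquiv.apply_symm_apply, hAB,
        LinearMap.toMatrix_id]
    exact Function.bijective_iff_has_inverse.2 ⟨Ginv,
      fun X => by simpa using congrArg (fun f => f X) (congrArg DFunLike.coe hc1),
      fun X => by simpa using congrArg (fun f => f X) (congrArg DFunLike.coe hc2)⟩
  · intro G hGF hFG
    have hGmat : LinearMap.toMatrix b b G = B := by
      have hGF' : G.comp F = LinearMap.id := LinearMap.ext hGF
      have h1 : LinearMap.toMatrix b b G * A = 1 := by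
        rw [← htm, ← LinearMap.toMatrix_comp b b b, hGF', LinearMap.toMatrix_id]
      calc LinearMap.toMatrix b b G = LinearMap.toMatrix b b G * (A * B) := by rw [hAB, mul_one]
        _ = (LinearMap.toMatrix b b G * A) * B := by rw [mul_assoc]
        _ = B := by rw [h1, one_mul]
    have htr : LinearMap.trace ℂ (Matrix (Fin d) (Fin d) ℂ) G = (d : ℂ) ^ 2 + d - 1 := by
      rw [LinearMap.trace_eq_matrix_trace ℂ b, hGmat]
      have : B.trace = ∑ ξ, ((d:ℂ)*((d:ℂ)+1) - 1) * (p ξ : ℂ) := by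
        simp [Matrix.trace, Matrix.diag, hBdef, hNdef]
      rw [this, ← Finset.mul_sum, hpsum]
      ring
    exact ⟨htr, by rw [htr]⟩
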